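/- Let g : ℝ → ℝ be differentiable at 0 with g(0) = 0, and let M ∈ ℝ^{d×d} with M ≠ 0. Then for any gated MLPs with weight matrices (W_down, W_gate, W_val) and (V_down, V_gate, V_val), there exists x ∈ ℝ^d with M x + W_down (g(W_gate x) ⊙ (W_val x)) ≠ V_down (g(V_gate x) ⊙ (V_val x)). -/

import Mathlib

lemma gated_term_deriv {g : ℝ → ℝ} (hg0 : g 0 = 0) (hg : DifferentiableAt ℝ g 0)
    (a b : ℝ) : HasDerivAt (fun t : ℝ => g (t * a) * (t * b)) 0 0 := by
  have h1 : HasDerivAt (fun t : ℝ => t * a) a 0 := by simpa using (hasDerivAt_id 0).mul_const a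
  have h2 : HasDerivAt (fun t : ℝ => g (t * a)) (deriv g 0 * a) 0 := by
    have h0 : HasDerivAt g (deriv g 0) ((fun t : ℝ => t * a) 0) := by
      simpa using hg.hasDerivAt
    exact h0.comp 0 h1
  have h3 : HasDerivAt (fun t : ℝ => t * b) b 0 := by simpa using (hasDerivAt_id 0).mul_const b
  have := h2.fun_mul h3
  simpa [hg0] using this

theorem gated_impossibility
    (d N : ℕ) (hd : 1 ≤ d) (hNd : d ≤ N)
    (g : ℝ → ℝ) (hg0 : g 0 = 0) (hg : DifferentiableAt ℝ g 0)
    (M : Matrix (Fin d) (Fin d) ℝ) (hM : M ≠ 0)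
    (Wgate Wval Vgate Vval : Matrix (Fin N) (Fin d) ℝ)
    (Wdown Vdown : Matrix (Fin d) (Fin N) ℝ) :
    ∃ x : Fin d → ℝ,
      M.mulVec x
        + Wdown.mulVec (fun i => g (Wgate.mulVec x i) * Wval.mulVec x i)
      ≠ Vdown.mulVec (fun i => g (Vgate.mulVec x i) * Vval.mulVec x i) := by
  by_contra h
  push_neg at h
  -- find a vector x₀ and coordinate j with (M x₀) j ≠ 0
  obtain ⟨j, k, hjk⟩ : ∃ j k, M j k ≠ 0 := by
    by_contra hc
    push_neg at hc
    exact hM (by ext j k; exact hc j k)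
  set x₀ : Fin d → ℝ := Pi.single k 1 with hx₀
  have hm : M.mulVec x₀ j = M j k := by
    simp [hx₀, Matrix.mulVec_single]
  -- scalar function along t • x₀, coordinate j
  set m : ℝ := M.mulVec x₀ j with hmdef
  have hmne : m ≠ 0 := by rw [hm]; exact hjk
  have key : ∀ t : ℝ,
      t * m + (∑ i, Wdown j i * (g (t * Wgate.mulVec x₀ i) * (t * Wval.mulVec x₀ i)))
        - (∑ i, Vdown j i * (g (t * Vgate.mulVec x₀ i) * (t * Vval.mulVec x₀ i))) = 0 := by
    intro t
    have := congrFun (h (t • x₀)) j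
    have e1 : ∀ (A : Matrix (Fin N) (Fin d) ℝ) i, A.mulVec (t • x₀) i = t * A.mulVec x₀ i := by
      intro A i
      rw [Matrix.mulVec_smul]
      rfl
    have e2 : M.mulVec (t • x₀) j = t * m := by
      rw [Matrix.mulVec_smul]; rfl
    simp only [Pi.add_apply, e2] at this
    rw [show (Wdown.mulVec (fun i => g (Wgate.mulVec (t • x₀) i) * Wval.mulVec (t • x₀) i)) j
        = ∑ i, Wdown j i * (g (t * Wgate.mulVec x₀ i) * (t * Wval.mulVec x₀ i)) by
      simp only [e1]; simp [Matrix.mulVec, dotProduct]] at this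
    rw [show (Vdown.mulVec (fun i => g (Vgate.mulVec (t • x₀) i) * Vval.mulVec (t • x₀) i)) j
        = ∑ i, Vdown j i * (g (t * Vgate.mulVec x₀ i) * (t * Vval.mulVec x₀ i)) by
      simp only [e1]; simp [Matrix.mulVec, dotProduct]] at this
    linarith [this]
  -- derivative of LHS at 0 is m, but LHS is constant 0
  have hd1 : HasDerivAt (fun t : ℝ =>
      t * m + (∑ i, Wdown j i * (g (t * Wgate.mulVec x₀ i) * (t * Wval.mulVec x₀ i)))
        - (∑ i, Vdown j i * (g (t * Vgate.mulVec x₀ i) * (t * Vval.mulVec x₀ i)))) m 0 := by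
    have hW : HasDerivAt (fun t : ℝ =>
        ∑ i, Wdown j i * (g (t * Wgate.mulVec x₀ i) * (t * Wval.mulVec x₀ i))) 0 0 := by
      have := HasDerivAt.fun_sum (u := Finset.univ) (fun i _ =>
        ((gated_term_deriv hg0 hg (Wgate.mulVec x₀ i) (Wval.mulVec x₀ i)).const_mul
          (Wdown j i)))
      simpa using this
    have hV : HasDerivAt (fun t : ℝ =>
        ∑ i, Vdown j i * (g (t * Vgate.mulVec x₀ i) * (t * Vval.mulVec x₀ i))) 0 0 := by
      have := HasDerivAt.fun_sum (u := Finset.univ) (fun i _ =>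
        ((gated_term_deriv hg0 hg (Vgate.mulVec x₀ i) (Vval.mulVec x₀ i)).const_mul
          (Vdown j i)))
      simpa using this
    have hlin : HasDerivAt (fun t : ℝ => t * m) m 0 := by simpa using (hasDerivAt_id 0).mul_const m
    simpa using (hlin.fun_add hW).fun_sub hV
  have hd2 : HasDerivAt (fun _ : ℝ =>
      (0 : ℝ)) 0 0 := hasDerivAt_const 0 0
  have : m = 0 := by
    have heq : (fun t : ℝ =>
      t * m + (∑ i, Wdown j i * (g (t * Wgate.mulVec x₀ i) * (t * Wval.mulVec x₀ i)))
        - (∑ i, Vdown j i * (g (t * Vgate.mulVec x₀ i) * (t * Vval.mulVec x₀ i))))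
        = fun _ : ℝ => (0 : ℝ) := funext key
    rw [heq] at hd1
    exact hd1.unique hd2
  exact hmne this
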